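/- Let (X_n)_{n∈ℤ} be a stationary, ℕ-valued stochastic process on a probability space (Ω,P) which is continued fraction mixing with coefficients θ(n) satisfying θ(1)<∞, θ(n)↓0, and fix κ≥1 with θ(κ) < 1/2. Let (c_n)_{n≥1} be positive reals with 2^n·P(X_0 > c_n) ≤ 1/2 for all sufficiently large n. Define B_n := ⋃_{k=2^n+1}^{2^{n+1}} ( {X_{-k} > c_n} ∩ {X_k > c_n} ). Then for all sufficiently large n: (1/(64(2κ+1)))·2^n·P(X_0 > c_n)² ≤ P(B_n) ≤ (1+θ(1))·2^n·P(X_0 > c_n)². -/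

import Mathlib

open MeasureTheory Filter Set Topology ENNReal

/-- A Bonferroni-type lower bound for the measure of a finite union. -/
private lemma bonferroni_aux {Ω : Type*} [MeasurableSpace Ω] (P : Measure Ω)
    [IsFiniteMeasure P] (A : ℕ → Set Ω) (hA : ∀ i, MeasurableSet (A i)) (s : Finset ℕ) :
    (∑ i ∈ s, (P (A i)).toReal)
      - ∑ i ∈ s, ∑ j ∈ s.erase i, (P (A i ∩ A j)).toReal
      ≤ (P (⋃ i ∈ s, A i)).toReal := by
  classical
  induction s using Finset.induction_on with
  | empty => simp
  | @insert a t ha ih =>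
    have hUmeas : MeasurableSet (⋃ i ∈ t, A i) :=
      MeasurableSet.biUnion t.countable_toSet (fun i _ => hA i)
    have hUnion : (⋃ i ∈ insert a t, A i) = A a ∪ ⋃ i ∈ t, A i :=
      Finset.set_biUnion_insert a t A
    have hie : P (A a ∪ ⋃ i ∈ t, A i) + P (A a ∩ ⋃ i ∈ t, A i)
        = P (A a) + P (⋃ i ∈ t, A i) := measure_union_add_inter (A a) hUmeas
    have hieR : (P (A a ∪ ⋃ i ∈ t, A i)).toReal + (P (A a ∩ ⋃ i ∈ t, A i)).toReal
        = (P (A a)).toReal + (P (⋃ i ∈ t, A i)).toReal := by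
      rw [← ENNReal.toReal_add (measure_ne_top P _) (measure_ne_top P _),
        ← ENNReal.toReal_add (measure_ne_top P _) (measure_ne_top P _), hie]
    have hsub : (P (A a ∩ ⋃ i ∈ t, A i)).toReal
        ≤ ∑ j ∈ t, (P (A a ∩ A j)).toReal := by
      have h1 : A a ∩ ⋃ i ∈ t, A i = ⋃ i ∈ t, (A a ∩ A i) := by
        rw [Set.inter_iUnion₂]
      have h2 : P (⋃ i ∈ t, (A a ∩ A i)) ≤ ∑ j ∈ t, P (A a ∩ A j) :=
        measure_biUnion_finset_le t _
      calc (P (A a ∩ ⋃ i ∈ t, A i)).toReal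
          ≤ (∑ j ∈ t, P (A a ∩ A j)).toReal := by
            rw [h1]
            exact ENNReal.toReal_mono
              (by exact (ENNReal.sum_lt_top.2 fun j _ => measure_lt_top P _).ne) h2
        _ = ∑ j ∈ t, (P (A a ∩ A j)).toReal :=
            ENNReal.toReal_sum (fun j _ => measure_ne_top P _)
    have hsum1 : ∑ i ∈ insert a t, (P (A i)).toReal
        = (P (A a)).toReal + ∑ i ∈ t, (P (A i)).toReal := Finset.sum_insert ha
    have hsum2 : ∑ i ∈ insert a t, ∑ j ∈ (insert a t).erase i, (P (A i ∩ A j)).toReal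
        = (∑ j ∈ t, (P (A a ∩ A j)).toReal)
          + ((∑ i ∈ t, (P (A i ∩ A a)).toReal)
            + ∑ i ∈ t, ∑ j ∈ t.erase i, (P (A i ∩ A j)).toReal) := by
      rw [Finset.sum_insert ha, Finset.erase_insert ha]
      have hinner : ∑ i ∈ t, ∑ j ∈ (insert a t).erase i, (P (A i ∩ A j)).toReal
          = ∑ i ∈ t, ((P (A i ∩ A a)).toReal
            + ∑ j ∈ t.erase i, (P (A i ∩ A j)).toReal) := by
        refine Finset.sum_congr rfl (fun i hi => ?_)
        have hne : a ≠ i := fun h => ha (h ▸ hi)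
        have hanotin : a ∉ t.erase i := fun h => ha (Finset.mem_of_mem_erase h)
        rw [Finset.erase_insert_of_ne hne, Finset.sum_insert hanotin]
      rw [hinner, Finset.sum_add_distrib]
    have hnn : 0 ≤ ∑ i ∈ t, (P (A i ∩ A a)).toReal :=
      Finset.sum_nonneg fun _ _ => ENNReal.toReal_nonneg
    rw [hUnion, hsum1, hsum2]
    linarith [ih]

set_option maxHeartbeats 1600000 in
/-- Borel–Cantelli-type estimate (⌁) for the two-sided exceedance events
`B_n = ⋃_{k=2^n+1}^{2^{n+1}} ({X_{-k} > c_n} ∩ {X_k > c_n})` of a stationary,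
continued fraction mixing, ℕ-valued process. -/
theorem two_sided_exceedance_probability_bounds
    {Ω : Type*} [MeasurableSpace Ω] (P : Measure Ω) [IsProbabilityMeasure P]
    (X : ℤ → Ω → ℕ) (hXm : ∀ j, Measurable (X j))
    -- stationarity (two-sided):
    (hstat : ∀ (j : ℤ) (n : ℕ) (A : Set (Fin n → ℕ)), MeasurableSet A →
      P {ω | (fun i : Fin n => X (j + (i : ℕ)) ω) ∈ A}
        = P {ω | (fun i : Fin n => X ((i : ℕ) : ℤ) ω) ∈ A})
    -- continued fraction mixing with coefficients `θ`:
    (θ : ℕ → ℝ) (hθnn : ∀ n, 0 ≤ θ n) (hθanti : Antitone θ)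
    (hθ0 : Tendsto θ atTop (𝓝 0))
    (hmix : ∀ (n : ℕ) (k : ℤ) (A B : Set Ω), 1 ≤ n →
      MeasurableSet[⨆ j ∈ Set.Iic k, MeasurableSpace.comap (X j) inferInstance] A →
      MeasurableSet[⨆ j ∈ Set.Ici (k + n), MeasurableSpace.comap (X j) inferInstance] B →
      |(P (A ∩ B)).toReal - (P A).toReal * (P B).toReal|
        ≤ θ n * (P A).toReal * (P B).toReal)
    (κ : ℕ) (hκ : 1 ≤ κ) (hθκ : θ κ < 1 / 2)
    (c : ℕ → ℝ) (hc : ∀ n, 0 < c n)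
    (hsmall : ∀ᶠ n : ℕ in atTop,
      (2 : ℝ) ^ n * (P {ω | c n < (X 0 ω : ℝ)}).toReal ≤ 1 / 2) :
    ∀ᶠ n : ℕ in atTop,
      (1 / (64 * (2 * (κ : ℝ) + 1))) * 2 ^ n * (P {ω | c n < (X 0 ω : ℝ)}).toReal ^ 2
        ≤ (P (⋃ k ∈ Finset.Icc (2 ^ n + 1) (2 ^ (n + 1)),
            ({ω | c n < (X (-(k : ℤ)) ω : ℝ)} ∩ {ω | c n < (X (k : ℤ) ω : ℝ)}))).toReal ∧
      (P (⋃ k ∈ Finset.Icc (2 ^ n + 1) (2 ^ (n + 1)),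
            ({ω | c n < (X (-(k : ℤ)) ω : ℝ)} ∩ {ω | c n < (X (k : ℤ) ω : ℝ)}))).toReal
        ≤ (1 + θ 1) * 2 ^ n * (P {ω | c n < (X 0 ω : ℝ)}).toReal ^ 2 := by
  classical
  have hbig : ∀ᶠ n : ℕ in atTop, 8 * κ ≤ 2 ^ n :=
    eventually_atTop.2 ⟨8 * κ, fun n hn => hn.trans (Nat.lt_two_pow_self).le⟩
  filter_upwards [hsmall, hbig] with n hp h8
  set p : ℝ := (P {ω | c n < (X 0 ω : ℝ)}).toReal with hpdef
  have hp0 : 0 ≤ p := ENNReal.toReal_nonneg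
  -- the exceedance events
  set E : ℤ → Set Ω := fun j => {ω | c n < (X j ω : ℝ)} with hEdef
  have hEpre : ∀ j : ℤ, E j = X j ⁻¹' {m : ℕ | c n < (m : ℝ)} := fun _ => rfl
  have hEmeas : ∀ j, MeasurableSet (E j) := by
    intro j
    rw [hEpre]
    exact (hXm j) MeasurableSet.of_discrete
  -- measurability with respect to past/future σ-algebras
  have hIic : ∀ j u : ℤ, j ≤ u →
      MeasurableSet[⨆ i ∈ Set.Iic u, MeasurableSpace.comap (X i) inferInstance] (E j) := by
    intro j u h
    have hle : MeasurableSpace.comap (X j) inferInstance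
        ≤ ⨆ i ∈ Set.Iic u, MeasurableSpace.comap (X i) inferInstance :=
      le_biSup (fun i => MeasurableSpace.comap (X i) inferInstance) (Set.mem_Iic.2 h)
    exact hle _ ⟨{m : ℕ | c n < (m : ℝ)}, MeasurableSet.of_discrete, (hEpre j).symm⟩
  have hIci : ∀ j u : ℤ, u ≤ j →
      MeasurableSet[⨆ i ∈ Set.Ici u, MeasurableSpace.comap (X i) inferInstance] (E j) := by
    intro j u h
    have hle : MeasurableSpace.comap (X j) inferInstance
        ≤ ⨆ i ∈ Set.Ici u, MeasurableSpace.comap (X i) inferInstance :=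
      le_biSup (fun i => MeasurableSpace.comap (X i) inferInstance) (Set.mem_Ici.2 h)
    exact hle _ ⟨{m : ℕ | c n < (m : ℝ)}, MeasurableSet.of_discrete, (hEpre j).symm⟩
  -- stationarity: all one-dimensional marginals agree
  have hEP : ∀ j : ℤ, (P (E j)).toReal = p := by
    intro j
    have hA : MeasurableSet {f : Fin 1 → ℕ | c n < ((f 0 : ℕ) : ℝ)} := by
      have hpre : {f : Fin 1 → ℕ | c n < ((f 0 : ℕ) : ℝ)}
          = (fun f : Fin 1 → ℕ => f 0) ⁻¹' {m : ℕ | c n < (m : ℝ)} := rfl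
      rw [hpre]
      exact (measurable_pi_apply (0 : Fin 1)) MeasurableSet.of_discrete
    have h := hstat j 1 _ hA
    have h1 : {ω | (fun i : Fin 1 => X (j + (i : ℕ)) ω) ∈
        {f : Fin 1 → ℕ | c n < ((f 0 : ℕ) : ℝ)}} = E j := by
      ext ω; simp [hEdef]
    have h2 : {ω | (fun i : Fin 1 => X ((i : ℕ) : ℤ) ω) ∈
        {f : Fin 1 → ℕ | c n < ((f 0 : ℕ) : ℝ)}} = {ω | c n < (X 0 ω : ℝ)} := by
      ext ω; simp
    rw [h1, h2] at h
    rw [h, hpdef]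
  -- the mixing inequality, in usable form
  have hmixR : ∀ (g : ℕ) (u : ℤ) (A B : Set Ω), 1 ≤ g →
      MeasurableSet[⨆ j ∈ Set.Iic u, MeasurableSpace.comap (X j) inferInstance] A →
      MeasurableSet[⨆ j ∈ Set.Ici (u + g), MeasurableSpace.comap (X j) inferInstance] B →
      (P (A ∩ B)).toReal ≤ (1 + θ g) * ((P A).toReal * (P B).toReal) ∧
        (1 - θ g) * ((P A).toReal * (P B).toReal) ≤ (P (A ∩ B)).toReal := by
    intro g u A B hg hA hB
    have h := abs_le.mp (hmix g u A B hg hA hB)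
    constructor <;> nlinarith [h.1, h.2]
  have hθhalf : ∀ g : ℕ, κ ≤ g → θ g ≤ 1 / 2 := fun g hg => (hθanti hg).trans hθκ.le
  -- upper bound for each single two-sided event
  have hAkUB : ∀ k : ℤ, 1 ≤ k →
      (P (E (-k) ∩ E k)).toReal ≤ (1 + θ 1) * (p * p) := by
    intro k hk
    have hg : 1 ≤ (2 * k).toNat := by omega
    have h := (hmixR ((2 * k).toNat) (-k) (E (-k)) (E k) hg
      (hIic _ _ le_rfl) (hIci k (-k + ((2 * k).toNat : ℤ)) (by omega))).1
    rw [hEP, hEP] at h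
    have hθle : θ ((2 * k).toNat) ≤ θ 1 := hθanti (by omega)
    nlinarith [mul_self_nonneg p]
  -- lower bound for each single two-sided event
  have hAkLB : ∀ k : ℤ, (κ : ℤ) ≤ 2 * k →
      (1 / 2) * (p * p) ≤ (P (E (-k) ∩ E k)).toReal := by
    intro k hk
    have hg : 1 ≤ (2 * k).toNat := by omega
    have h := (hmixR ((2 * k).toNat) (-k) (E (-k)) (E k) hg
      (hIic _ _ le_rfl) (hIci k (-k + ((2 * k).toNat : ℤ)) (by omega))).2
    rw [hEP, hEP] at h
    have hθle : θ ((2 * k).toNat) ≤ 1 / 2 := hθhalf _ (by omega)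
    nlinarith [mul_self_nonneg p]
  -- upper bound for the four-fold intersections
  have hquad : ∀ a b : ℤ, (κ : ℤ) ≤ 2 * a → a + κ ≤ b →
      (P ((E (-b) ∩ E (-a) ∩ E a) ∩ E b)).toReal ≤ 4 * (p * p * (p * p)) := by
    intro a b h2a hab
    have hg1 : 1 ≤ (b - a).toNat := by omega
    have hg2 : 1 ≤ (2 * a).toNat := by omega
    -- step C : the two past events
    have hC := (hmixR ((b - a).toNat) (-b) (E (-b)) (E (-a)) hg1
      (hIic _ _ le_rfl) (hIci (-a) (-b + ((b - a).toNat : ℤ)) (by omega))).1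
    rw [hEP, hEP] at hC
    -- step B : add the event at `a`
    have hB := (hmixR ((2 * a).toNat) (-a) (E (-b) ∩ E (-a)) (E a) hg2
      ((hIic _ _ (by omega)).inter (hIic _ _ le_rfl))
      (hIci a (-a + ((2 * a).toNat : ℤ)) (by omega))).1
    rw [hEP] at hB
    -- step A : add the event at `b`
    have hA := (hmixR ((b - a).toNat) a (E (-b) ∩ E (-a) ∩ E a) (E b) hg1
      (((hIic _ _ (by omega)).inter (hIic _ _ (by omega))).inter (hIic _ _ le_rfl))
      (hIci b (a + ((b - a).toNat : ℤ)) (by omega))).1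
    rw [hEP] at hA
    set t2 : ℝ := (P (E (-b) ∩ E (-a))).toReal with ht2
    set t3 : ℝ := (P (E (-b) ∩ E (-a) ∩ E a)).toReal with ht3
    have ht2nn : 0 ≤ t2 := ENNReal.toReal_nonneg
    have ht3nn : 0 ≤ t3 := ENNReal.toReal_nonneg
    have hθ1 : θ ((b - a).toNat) ≤ 1 / 2 := hθhalf _ (by omega)
    have hθ2 : θ ((2 * a).toNat) ≤ 1 / 2 := hθhalf _ (by omega)
    have e3 : t2 ≤ (3 / 2) * (p * p) := by nlinarith [mul_self_nonneg p]
    have e2 : t3 ≤ (3 / 2) * (t2 * p) := by nlinarith [mul_nonneg ht2nn hp0]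
    have e1 : (P ((E (-b) ∩ E (-a) ∩ E a) ∩ E b)).toReal
        ≤ (3 / 2) * (t3 * p) := by nlinarith [mul_nonneg ht3nn hp0]
    nlinarith [mul_le_mul_of_nonneg_right e2 hp0,
      mul_le_mul_of_nonneg_right (mul_le_mul_of_nonneg_right e3 hp0) hp0,
      mul_nonneg (mul_nonneg hp0 hp0) (mul_nonneg hp0 hp0)]
  -- cardinality of the index range
  have hpowN : (2 : ℕ) ^ (n + 1) = 2 * 2 ^ n := by ring
  have hcard : (Finset.Icc ((2 : ℤ) ^ n + 1) ((2 : ℤ) ^ (n + 1))).card = 2 ^ n := by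
    rw [Int.card_Icc]
    have h2 : (2 : ℤ) ^ (n + 1) + 1 - ((2 : ℤ) ^ n + 1) = ((2 ^ n : ℕ) : ℤ) := by
      push_cast; ring
    rw [h2, Int.toNat_natCast]
  have hposZ : (0 : ℤ) < 2 ^ n := by positivity
  constructor
  · -- LOWER BOUND
    set K : ℕ := 2 ^ n + 1 with hK
    set m : ℕ := 2 ^ n / κ with hm
    have hκpos : 0 < κ := hκ
    have hκ2n : κ ≤ 2 ^ n := by omega
    have hm1 : 1 ≤ m := (Nat.one_le_div_iff hκpos).2 hκ2n
    have hmul : m * κ ≤ 2 ^ n := Nat.div_mul_le_self _ _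
    have hdm := Nat.div_add_mod (2 ^ n) κ
    rw [← hm] at hdm
    have hmod := Nat.mod_lt (2 ^ n) hκpos
    have hlow : 2 ^ n < (m + 1) * κ := by
      have h' : (m + 1) * κ = κ * m + κ := by ring
      rw [h']
      linarith [hdm, hmod]
    have h2nlemk : 2 ^ n ≤ 2 * (m * κ) := by
      have hκm : κ ≤ m * κ := Nat.le_mul_of_pos_left κ hm1
      have h' : (m + 1) * κ = m * κ + κ := by ring
      rw [h'] at hlow
      linarith [hlow, hκm]
    have hmle : m ≤ 2 ^ n := (Nat.div_le_self _ _)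
    -- the selected indices, the events
    set A : ℕ → Set Ω := fun i => E (-((K + i * κ : ℕ) : ℤ)) ∩ E ((K + i * κ : ℕ) : ℤ)
      with hAdef
    have hAmeas : ∀ i, MeasurableSet (A i) := fun i => (hEmeas _).inter (hEmeas _)
    -- basic inequalities about the selected indices
    have hκK : ∀ i : ℕ, κ ≤ K + i * κ :=
      fun i => le_trans (by omega) (Nat.le_add_right K (i * κ))
    have h2aZ : ∀ i : ℕ, (κ : ℤ) ≤ 2 * ((K + i * κ : ℕ) : ℤ) := by
      intro i
      have h1 : (κ : ℤ) ≤ ((K + i * κ : ℕ) : ℤ) := by exact_mod_cast hκK i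
      have h2 : (0 : ℤ) ≤ ((K + i * κ : ℕ) : ℤ) := Int.natCast_nonneg _
      linarith
    have hmemN : ∀ i : ℕ, i < m → 2 ^ n + 1 ≤ K + i * κ ∧ K + i * κ ≤ 2 ^ (n + 1) := by
      intro i hi
      constructor
      · exact le_trans (le_of_eq hK.symm) (Nat.le_add_right K (i * κ))
      · have h1 : (i + 1) * κ ≤ m * κ := mul_le_mul_left (by omega) κ
        have h1' : i * κ + κ ≤ m * κ := by linarith [h1]
        have : K + i * κ ≤ 2 ^ n + 1 + (2 ^ n - κ) := by
          have : i * κ ≤ 2 ^ n - κ := by omega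
          omega
        omega
    have hmem : ∀ i : ℕ, i < m →
        ((K + i * κ : ℕ) : ℤ) ∈ Finset.Icc ((2 : ℤ) ^ n + 1) ((2 : ℤ) ^ (n + 1)) := by
      intro i hi
      obtain ⟨hl, hr⟩ := hmemN i hi
      refine Finset.mem_Icc.2 ⟨?_, ?_⟩
      · exact_mod_cast hl
      · exact_mod_cast hr
    -- per-index lower bound
    have hsingle : ∀ i ∈ Finset.range m, (1 / 2) * (p * p) ≤ (P (A i)).toReal := by
      intro i hi
      exact hAkLB ((K + i * κ : ℕ) : ℤ) (h2aZ i)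
    -- pairwise upper bound
    have hgapZ : ∀ i j : ℕ, i < j →
        ((K + i * κ : ℕ) : ℤ) + κ ≤ ((K + j * κ : ℕ) : ℤ) := by
      intro i j hij
      have h1 : (i + 1) * κ ≤ j * κ := mul_le_mul_left (by omega) κ
      have h2 : (K + i * κ) + κ ≤ K + j * κ := by linarith [h1]
      exact_mod_cast h2
    have hpairbound : ∀ i j, i ∈ Finset.range m → j ∈ (Finset.range m).erase i →
        (P (A i ∩ A j)).toReal ≤ 4 * (p * p * (p * p)) := by
      intro i j hi hj
      have hne : j ≠ i := Finset.ne_of_mem_erase hj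
      rcases Nat.lt_or_ge i j with hij | hij
      · have hq := hquad ((K + i * κ : ℕ) : ℤ) ((K + j * κ : ℕ) : ℤ)
          (h2aZ i) (hgapZ i j hij)
        refine le_trans (ENNReal.toReal_mono (measure_ne_top P _) (measure_mono ?_)) hq
        exact fun ω h => ⟨⟨⟨h.2.1, h.1.1⟩, h.1.2⟩, h.2.2⟩
      · have hji : j < i := by omega
        have hq := hquad ((K + j * κ : ℕ) : ℤ) ((K + i * κ : ℕ) : ℤ)
          (h2aZ j) (hgapZ j i hji)
        refine le_trans (ENNReal.toReal_mono (measure_ne_top P _) (measure_mono ?_)) hq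
        exact fun ω h => ⟨⟨⟨h.1.1, h.2.1⟩, h.2.2⟩, h.1.2⟩
    -- Bonferroni
    have hbonf := bonferroni_aux P A hAmeas (Finset.range m)
    -- sum bounds
    have hsing : (m : ℝ) * ((1 / 2) * (p * p)) ≤ ∑ i ∈ Finset.range m, (P (A i)).toReal := by
      have := Finset.card_nsmul_le_sum (Finset.range m) (fun i => (P (A i)).toReal)
        ((1 / 2) * (p * p)) hsingle
      rwa [Finset.card_range, nsmul_eq_mul] at this
    have hq4nn : (0 : ℝ) ≤ 4 * (p * p * (p * p)) := by positivity
    have hpairs : ∑ i ∈ Finset.range m, ∑ j ∈ (Finset.range m).erase i,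
        (P (A i ∩ A j)).toReal ≤ (m : ℝ) * ((m : ℝ) * (4 * (p * p * (p * p)))) := by
      calc ∑ i ∈ Finset.range m, ∑ j ∈ (Finset.range m).erase i, (P (A i ∩ A j)).toReal
          ≤ ∑ i ∈ Finset.range m, (m : ℝ) * (4 * (p * p * (p * p))) := by
            refine Finset.sum_le_sum (fun i hi => ?_)
            have h1 := Finset.sum_le_card_nsmul ((Finset.range m).erase i)
              (fun j => (P (A i ∩ A j)).toReal) (4 * (p * p * (p * p)))
              (fun j hj => hpairbound i j hi hj)
            have h2 : (((Finset.range m).erase i).card : ℝ) ≤ (m : ℝ) := by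
              have := (Finset.card_erase_le (s := Finset.range m) (a := i)).trans
                (le_of_eq (Finset.card_range m))
              exact_mod_cast this
            rw [nsmul_eq_mul] at h1
            exact h1.trans (mul_le_mul_of_nonneg_right h2 hq4nn)
        _ = (m : ℝ) * ((m : ℝ) * (4 * (p * p * (p * p)))) := by
            rw [Finset.sum_const, Finset.card_range, nsmul_eq_mul]
    -- the union over the subfamily is contained in B_n
    have hsubU : (P (⋃ i ∈ Finset.range m, A i)).toReal
        ≤ (P (⋃ k ∈ Finset.Icc (2 ^ n + 1) (2 ^ (n + 1)),
            ({ω | c n < (X (-(k : ℤ)) ω : ℝ)} ∩ {ω | c n < (X (k : ℤ) ω : ℝ)}))).toReal := by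
      refine ENNReal.toReal_mono (measure_ne_top P _) (measure_mono ?_)
      refine Set.iUnion₂_subset (fun i hi => ?_)
      have him : i < m := Finset.mem_range.1 hi
      intro ω hω
      exact Set.mem_iUnion₂.2 ⟨((K + i * κ : ℕ) : ℤ), hmem i him, hω⟩
    -- numeric facts
    have hmR1 : ((2 : ℝ) ^ n) ≤ 2 * ((m : ℝ) * (κ : ℝ)) := by
      have h' : ((2 ^ n : ℕ) : ℝ) ≤ ((2 * (m * κ) : ℕ) : ℝ) := Nat.cast_le.2 h2nlemk
      push_cast at h'
      linarith
    have hmR2 : (m : ℝ) ≤ (2 : ℝ) ^ n := by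
      have h' : ((m : ℕ) : ℝ) ≤ ((2 ^ n : ℕ) : ℝ) := Nat.cast_le.2 hmle
      push_cast at h'
      linarith
    have h8R : 8 * (κ : ℝ) ≤ (2 : ℝ) ^ n := by
      have h' : ((8 * κ : ℕ) : ℝ) ≤ ((2 ^ n : ℕ) : ℝ) := Nat.cast_le.2 h8
      push_cast at h'
      linarith
    have hκR : (1 : ℝ) ≤ (κ : ℝ) := by exact_mod_cast hκ
    have hmRnn : (0 : ℝ) ≤ (m : ℝ) := Nat.cast_nonneg m
    -- main numeric inequality
    have hmain : (1 / (64 * (2 * (κ : ℝ) + 1))) * 2 ^ n * p ^ 2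
        ≤ (m : ℝ) * ((1 / 2) * (p * p)) - (m : ℝ) * ((m : ℝ) * (4 * (p * p * (p * p)))) := by
      set u : ℝ := p * p with hu
      have hu0 : 0 ≤ u := mul_self_nonneg p
      have hap : (m : ℝ) * p ≤ 1 / 2 := by
        have h1 : (m : ℝ) * p ≤ (2 : ℝ) ^ n * p := mul_le_mul_of_nonneg_right hmR2 hp0
        linarith
      have hapnn : 0 ≤ (m : ℝ) * p := mul_nonneg hmRnn hp0
      have h1 : (m : ℝ) * ((m : ℝ) * (4 * (u * u))) ≤ u := by
        have heq : (m : ℝ) * ((m : ℝ) * (4 * (u * u)))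
            = 4 * (((m : ℝ) * p) * ((m : ℝ) * p)) * u := by rw [hu]; ring
        have hsq : (m : ℝ) * p * ((m : ℝ) * p) ≤ 1 / 4 := by nlinarith [hap, hapnn]
        rw [heq]
        nlinarith [mul_le_mul_of_nonneg_right hsq hu0]
      have hTu : (2 : ℝ) ^ n * u ≤ 2 * ((m : ℝ) * (κ : ℝ)) * u :=
        mul_le_mul_of_nonneg_right hmR1 hu0
      have h8u : 8 * (κ : ℝ) * u ≤ (2 : ℝ) ^ n * u :=
        mul_le_mul_of_nonneg_right h8R hu0
      have hκRpos : (0 : ℝ) < (κ : ℝ) := by linarith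
      have huau : u ≤ (m : ℝ) * u / 4 := by
        have hcomb : 8 * (κ : ℝ) * u ≤ 2 * ((m : ℝ) * (κ : ℝ)) * u := le_trans h8u hTu
        have h' : (κ : ℝ) * (8 * u) ≤ (κ : ℝ) * (2 * ((m : ℝ) * u)) := by nlinarith
        have := le_of_mul_le_mul_left h' hκRpos
        linarith
      have hc1 : (0 : ℝ) < 64 * (2 * (κ : ℝ) + 1) := by positivity
      have hkey : (1 / (64 * (2 * (κ : ℝ) + 1))) * 2 ^ n * p ^ 2 ≤ (m : ℝ) * u / 4 := by
        rw [show (1 / (64 * (2 * (κ : ℝ) + 1))) * 2 ^ n * p ^ 2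
            = ((2 : ℝ) ^ n * u) / (64 * (2 * (κ : ℝ) + 1)) by rw [hu]; ring,
          div_le_iff₀ hc1]
        have hmu : (0 : ℝ) ≤ (m : ℝ) * u := mul_nonneg hmRnn hu0
        nlinarith
      have hfin : (m : ℝ) * u / 4 ≤ (m : ℝ) * ((1 / 2) * u)
          - (m : ℝ) * ((m : ℝ) * (4 * (u * u))) := by
        nlinarith [h1]
      calc (1 / (64 * (2 * (κ : ℝ) + 1))) * 2 ^ n * p ^ 2
          ≤ (m : ℝ) * u / 4 := hkey
        _ ≤ (m : ℝ) * ((1 / 2) * u) - (m : ℝ) * ((m : ℝ) * (4 * (u * u))) := hfin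
        _ = (m : ℝ) * ((1 / 2) * (p * p)) - (m : ℝ) * ((m : ℝ) * (4 * (p * p * (p * p)))) := by
            rw [hu]
    linarith [hbonf, hsing, hpairs, hsubU, hmain]
  · -- UPPER BOUND
    have hunion : (P (⋃ k ∈ Finset.Icc (2 ^ n + 1) (2 ^ (n + 1)),
        ({ω | c n < (X (-(k : ℤ)) ω : ℝ)} ∩ {ω | c n < (X (k : ℤ) ω : ℝ)}))).toReal
        ≤ ∑ k ∈ Finset.Icc ((2 : ℤ) ^ n + 1) ((2 : ℤ) ^ (n + 1)),
          (P (E (-k) ∩ E k)).toReal := by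
      have h2 : P (⋃ k ∈ Finset.Icc ((2 : ℤ) ^ n + 1) ((2 : ℤ) ^ (n + 1)),
          (E (-k) ∩ E k))
          ≤ ∑ k ∈ Finset.Icc ((2 : ℤ) ^ n + 1) ((2 : ℤ) ^ (n + 1)), P (E (-k) ∩ E k) :=
        measure_biUnion_finset_le _ _
      calc (P (⋃ k ∈ Finset.Icc (2 ^ n + 1) (2 ^ (n + 1)),
          ({ω | c n < (X (-(k : ℤ)) ω : ℝ)} ∩ {ω | c n < (X (k : ℤ) ω : ℝ)}))).toReal
          ≤ (∑ k ∈ Finset.Icc ((2 : ℤ) ^ n + 1) ((2 : ℤ) ^ (n + 1)),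
              P (E (-k) ∩ E k)).toReal := by
            exact ENNReal.toReal_mono
              (by exact (ENNReal.sum_lt_top.2 fun j _ => measure_lt_top P _).ne) h2
        _ = ∑ k ∈ Finset.Icc ((2 : ℤ) ^ n + 1) ((2 : ℤ) ^ (n + 1)),
              (P (E (-k) ∩ E k)).toReal :=
            ENNReal.toReal_sum (fun j _ => measure_ne_top P _)
    have hsum : ∑ k ∈ Finset.Icc ((2 : ℤ) ^ n + 1) ((2 : ℤ) ^ (n + 1)),
        (P (E (-k) ∩ E k)).toReal
        ≤ (Finset.Icc ((2 : ℤ) ^ n + 1) ((2 : ℤ) ^ (n + 1))).card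
          • ((1 + θ 1) * (p * p)) := by
      apply Finset.sum_le_card_nsmul
      intro k hk
      have hk1 : (2 : ℤ) ^ n + 1 ≤ k := (Finset.mem_Icc.1 hk).1
      exact hAkUB k (by linarith [hposZ])
    rw [hcard, nsmul_eq_mul] at hsum
    have hconst : ((2 ^ n : ℕ) : ℝ) * ((1 + θ 1) * (p * p)) = (1 + θ 1) * 2 ^ n * p ^ 2 := by
      push_cast
      ring
    linarith [hunion, hsum]
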